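/- Assume (A). Then for every (a,s) ∈ 𝔊° with a − b − 𝟏 ≠ 0: the linear function φ_a attains its maximum value m_{a,s} = max_{x∈P_{a,s}} φ_a(x) on the polyhedron P_{a,s} (in particular the supremum of φ_a over P_{a,s} is finite and attained); the set M_{a,s} = {x ∈ P_{a,s} : φ_a(x) = m_{a,s}} is bounded; and the affine dimension d_{a,s} of M_{a,s} satisfies 0 ≤ d_{a,s} ≤ N−1. -/

import Mathlib

open MeasureTheory
open scoped ENNReal Classical

/-- `I(r) = ∫_{(0,1]^N} x^b / (Σ_{(a,s)∈𝔊} x^a r^s) dx`, with values in `[0,∞]`. -/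
noncomputable def Ifun (N : ℕ) (G : Finset ((Fin N → ℕ) × ℝ)) (b : Fin N → ℕ)
    (r : ℝ) : ℝ≥0∞ :=
  ∫⁻ x in Set.univ.pi (fun _ : Fin N => Set.Ioc (0 : ℝ) 1),
    ENNReal.ofReal ((∏ i, x i ^ b i) / ∑ p ∈ G, (∏ i, x i ^ p.1 i) * r ^ p.2)

/-- The polyhedron `P_{a,s} = {y ∈ [0,∞)^N : ⟨a − a′, y⟩ ≤ s′ − s for all (a′,s′) ∈ 𝔊}`. -/
def Pset (N : ℕ) (G : Finset ((Fin N → ℕ) × ℝ)) (a : Fin N → ℕ) (s : ℝ) :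
    Set (Fin N → ℝ) :=
  {y | (∀ i, 0 ≤ y i) ∧ ∀ p ∈ G, ∑ i, ((a i : ℝ) - (p.1 i : ℝ)) * y i ≤ p.2 - s}

/-- The linear function `φ_a(y) = ⟨a − b − 𝟏, y⟩`. -/
def phiFun (N : ℕ) (a b : Fin N → ℕ) (y : Fin N → ℝ) : ℝ :=
  ∑ i, ((a i : ℝ) - (b i : ℝ) - 1) * y i

/-- `𝔊° = {(a,s) ∈ 𝔊 : P_{a,s} has positive N-dimensional Lebesgue measure}`. -/
noncomputable def Gcirc (N : ℕ) (G : Finset ((Fin N → ℕ) × ℝ)) :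
    Finset ((Fin N → ℕ) × ℝ) :=
  G.filter (fun p => 0 < volume (Pset N G p.1 p.2))

section Aux

lemma sum_lin {N : ℕ} (c y0 v : Fin N → ℝ) (t : ℝ) :
    ∑ i, c i * (y0 i + t * v i) = ∑ i, c i * y0 i + t * ∑ i, c i * v i := by
  rw [Finset.mul_sum, ← Finset.sum_add_distrib]
  exact Finset.sum_congr rfl fun i _ => by ring

/-- Key consequence of assumption (A): the recession cone of `P_{a,s}` contains no nonzero
vector on which `φ` is nonnegative. -/
lemma cone_key {N : ℕ} {G : Finset ((Fin N → ℕ) × ℝ)} {b : Fin N → ℕ}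
    (hA : ∀ r : ℝ, 0 < r → r < 1 → Ifun N G b r < ⊤)
    {a : Fin N → ℕ} {s : ℝ} (haG : (a, s) ∈ G)
    {y0 : Fin N → ℝ} (hy0 : y0 ∈ Pset N G a s)
    (v : Fin N → ℝ) (hv0 : ∀ i, 0 ≤ v i)
    (hvc : ∀ q ∈ G, ∑ i, ((a i : ℝ) - (q.1 i : ℝ)) * v i ≤ 0)
    (hvphi : 0 ≤ phiFun N a b v) : v = 0 := by
  by_contra hv
  obtain ⟨j, hj⟩ : ∃ j, v j ≠ 0 := by
    by_contra h; push_neg at h; exact hv (funext h)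
  have hvj : 0 < v j := lt_of_le_of_ne (hv0 j) (Ne.symm hj)
  have hr0 : (0:ℝ) < 1/2 := by norm_num
  have hr1 : (1/2:ℝ) < 1 := by norm_num
  set r : ℝ := 1/2 with hrdef
  set T : ℝ := 2 / v j with hT
  have hT0 : 0 ≤ T := by positivity
  set y : ℕ → Fin N → ℝ := fun k i => y0 i + ((k : ℝ) * T) * v i with hy
  have hkT0 : ∀ k : ℕ, 0 ≤ (k:ℝ) * T := fun k => mul_nonneg (Nat.cast_nonneg k) hT0
  have hyP : ∀ k, y k ∈ Pset N G a s := by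
    intro k
    refine ⟨fun i => add_nonneg (hy0.1 i) (mul_nonneg (hkT0 k) (hv0 i)), fun q hq => ?_⟩
    have h1 := hy0.2 q hq
    have h2 := hvc q hq
    have h3 : (k:ℝ)*T * ∑ i, ((a i:ℝ) - (q.1 i:ℝ)) * v i ≤ 0 :=
      mul_nonpos_of_nonneg_of_nonpos (hkT0 k) h2
    calc ∑ i, ((a i:ℝ) - (q.1 i:ℝ)) * y k i
        = ∑ i, ((a i:ℝ) - (q.1 i:ℝ)) * y0 i
          + (k:ℝ)*T * ∑ i, ((a i:ℝ) - (q.1 i:ℝ)) * v i := by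
          simp only [hy]; exact sum_lin _ _ _ _
      _ ≤ q.2 - s := by linarith
  have hynn : ∀ k i, 0 ≤ y k i := fun k i => (hyP k).1 i
  have hphiy : ∀ k, phiFun N a b y0 ≤ phiFun N a b (y k) := by
    intro k
    have he : phiFun N a b (y k)
        = phiFun N a b y0 + ((k:ℝ)*T) * phiFun N a b v := by
      simp only [phiFun, hy]; exact sum_lin _ _ _ _
    have := mul_nonneg (hkT0 k) hvphi
    linarith
  have hyj : ∀ k : ℕ, y k j = y0 j + 2 * (k:ℝ) := by
    intro k
    simp only [hy, hT]
    field_simp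
  set B : ℕ → Set (Fin N → ℝ) :=
    fun k => Set.univ.pi fun i => Set.Ioc (r ^ (y k i + 1)) (r ^ (y k i)) with hB
  have hBmeas : ∀ k, MeasurableSet (B k) := fun k =>
    MeasurableSet.univ_pi fun i => measurableSet_Ioc
  have hrp : ∀ e : ℝ, (0:ℝ) < r ^ e := fun e => Real.rpow_pos_of_pos hr0 e
  have hBsub : ∀ k, B k ⊆ Set.univ.pi fun _ : Fin N => Set.Ioc (0:ℝ) 1 := by
    intro k x hx i _
    have h := hx i (Set.mem_univ i)
    exact ⟨lt_trans (hrp _) h.1, h.2.trans (Real.rpow_le_one hr0.le hr1.le (hynn k i))⟩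
  have hdisj : ∀ k k' : ℕ, k < k' → Disjoint (B k) (B k') := by
    intro k k' hkk'
    rw [Set.disjoint_left]
    intro x hx hx'
    have h1 := hx j (Set.mem_univ j)
    have h2 := hx' j (Set.mem_univ j)
    have hcast : (k:ℝ) + 1 ≤ (k':ℝ) := by exact_mod_cast hkk'
    have hlt : y k j + 1 < y k' j := by
      rw [hyj, hyj]; linarith
    have h4 : r ^ (y k' j) < r ^ (y k j + 1) :=
      Real.rpow_lt_rpow_of_exponent_gt hr0 hr1 hlt
    have := h2.2
    have := h1.1
    linarith
  have hvolB : ∀ k, volume (B k)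
      = ENNReal.ofReal ((1 - r) ^ N * r ^ (∑ i, y k i)) := by
    intro k
    rw [hB]
    rw [volume_pi_pi]
    have h1 : ∀ i : Fin N, volume (Set.Ioc (r ^ (y k i + 1)) (r ^ (y k i)))
        = ENNReal.ofReal (r ^ (y k i) * (1 - r)) := by
      intro i
      rw [Real.volume_Ioc]
      congr 1
      rw [Real.rpow_add_one (ne_of_gt hr0)]
      ring
    simp only [h1]
    rw [← ENNReal.ofReal_prod_of_nonneg (fun i _ => by positivity)]
    congr 1
    rw [Finset.prod_mul_distrib, Finset.prod_const, Finset.card_univ, Fintype.card_fin,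
      ← Real.rpow_sum_of_pos hr0]
    ring
  have hGcard : (0:ℝ) < (G.card : ℝ) := by
    exact_mod_cast Finset.card_pos.mpr ⟨_, haG⟩
  have hpoint : ∀ (k : ℕ), ∀ x ∈ B k,
      r ^ (∑ i, (y k i + 1) * (b i:ℝ)) / ((G.card : ℝ) * r ^ ((∑ i, y k i * (a i:ℝ)) + s))
        ≤ (∏ i, x i ^ b i) / ∑ q ∈ G, (∏ i, x i ^ q.1 i) * r ^ q.2 := by
    intro k x hx
    have hxpos : ∀ i, 0 < x i := fun i => lt_trans (hrp _) (hx i (Set.mem_univ i)).1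
    have hnum : r ^ (∑ i, (y k i + 1) * (b i:ℝ)) ≤ ∏ i, x i ^ b i := by
      rw [Real.rpow_sum_of_pos hr0]
      refine Finset.prod_le_prod (fun i _ => (hrp _).le) ?_
      intro i _
      have h1 : r ^ (y k i + 1) ≤ x i := (hx i (Set.mem_univ i)).1.le
      calc r ^ ((y k i + 1) * (b i:ℝ)) = (r ^ (y k i + 1)) ^ (b i) := by
            rw [Real.rpow_mul hr0.le, Real.rpow_natCast]
        _ ≤ x i ^ b i := pow_le_pow_left₀ (hrp _).le h1 _
    have hden : ∑ q ∈ G, (∏ i, x i ^ q.1 i) * r ^ q.2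
        ≤ (G.card : ℝ) * r ^ ((∑ i, y k i * (a i:ℝ)) + s) := by
      have hterm : ∀ q ∈ G, (∏ i, x i ^ q.1 i) * r ^ q.2
          ≤ r ^ ((∑ i, y k i * (a i:ℝ)) + s) := by
        intro q hq
        have h1 : (∏ i, x i ^ q.1 i) ≤ r ^ (∑ i, y k i * (q.1 i:ℝ)) := by
          rw [Real.rpow_sum_of_pos hr0]
          refine Finset.prod_le_prod (fun i _ => pow_nonneg (hxpos i).le _) ?_
          intro i _
          have h2 : x i ≤ r ^ (y k i) := (hx i (Set.mem_univ i)).2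
          calc x i ^ q.1 i ≤ (r ^ (y k i)) ^ (q.1 i) := pow_le_pow_left₀ (hxpos i).le h2 _
            _ = r ^ (y k i * (q.1 i:ℝ)) := by
                rw [← Real.rpow_natCast (r ^ (y k i)) (q.1 i), ← Real.rpow_mul hr0.le]
        have h3 : (∏ i, x i ^ q.1 i) * r ^ q.2
            ≤ r ^ (∑ i, y k i * (q.1 i:ℝ)) * r ^ q.2 :=
          mul_le_mul_of_nonneg_right h1 (hrp _).le
        have h4 : r ^ (∑ i, y k i * (q.1 i:ℝ)) * r ^ q.2
            = r ^ ((∑ i, y k i * (q.1 i:ℝ)) + q.2) := (Real.rpow_add hr0 _ _).symm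
        have h5 : (∑ i, y k i * (a i:ℝ)) + s ≤ (∑ i, y k i * (q.1 i:ℝ)) + q.2 := by
          have hP := (hyP k).2 q hq
          have hsplit : ∑ i, ((a i:ℝ) - (q.1 i:ℝ)) * y k i
              = ∑ i, y k i * (a i:ℝ) - ∑ i, y k i * (q.1 i:ℝ) := by
            rw [← Finset.sum_sub_distrib]
            exact Finset.sum_congr rfl fun i _ => by ring
          rw [hsplit] at hP
          linarith
        have h6 : r ^ ((∑ i, y k i * (q.1 i:ℝ)) + q.2)
            ≤ r ^ ((∑ i, y k i * (a i:ℝ)) + s) :=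
          Real.rpow_le_rpow_of_exponent_ge hr0 hr1.le h5
        linarith
      calc ∑ q ∈ G, (∏ i, x i ^ q.1 i) * r ^ q.2
          ≤ ∑ _q ∈ G, r ^ ((∑ i, y k i * (a i:ℝ)) + s) := Finset.sum_le_sum hterm
        _ = (G.card : ℝ) * r ^ ((∑ i, y k i * (a i:ℝ)) + s) := by
            rw [Finset.sum_const, nsmul_eq_mul]
    have hdenpos : 0 < ∑ q ∈ G, (∏ i, x i ^ q.1 i) * r ^ q.2 := by
      refine Finset.sum_pos' (fun q _ => ?_) ⟨(a,s), haG, ?_⟩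
      · exact mul_nonneg (Finset.prod_nonneg fun i _ => pow_nonneg (hxpos i).le _) (hrp _).le
      · exact mul_pos (Finset.prod_pos fun i _ => pow_pos (hxpos i) _) (hrp _)
    exact div_le_div₀ (Finset.prod_nonneg fun i _ => pow_nonneg (hxpos i).le _)
      hnum hdenpos hden
  set E : ℝ := (∑ i, (b i:ℝ)) - phiFun N a b y0 - s with hE
  set κr : ℝ := (1 - r) ^ N / (G.card : ℝ) * r ^ E with hκr
  have hκrpos : 0 < κr := by
    rw [hκr]
    have := hrp E
    positivity
  have hbox : ∀ k : ℕ, ENNReal.ofReal κr ≤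
      ∫⁻ x in B k, ENNReal.ofReal
        ((∏ i, x i ^ b i) / ∑ q ∈ G, (∏ i, x i ^ q.1 i) * r ^ q.2) := by
    intro k
    set ck : ℝ := r ^ (∑ i, (y k i + 1) * (b i:ℝ))
        / ((G.card : ℝ) * r ^ ((∑ i, y k i * (a i:ℝ)) + s)) with hck
    have h1 : ∫⁻ _x in B k, ENNReal.ofReal ck ≤ ∫⁻ x in B k, ENNReal.ofReal
        ((∏ i, x i ^ b i) / ∑ q ∈ G, (∏ i, x i ^ q.1 i) * r ^ q.2) :=
      setLIntegral_mono' (hBmeas k) fun x hx =>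
        ENNReal.ofReal_le_ofReal (hpoint k x hx)
    refine le_trans ?_ h1
    rw [setLIntegral_const, hvolB k, ← ENNReal.ofReal_mul (by positivity)]
    apply ENNReal.ofReal_le_ofReal
    have hekE : (∑ i, (y k i + 1) * (b i:ℝ)) + (∑ i, y k i)
        - ((∑ i, y k i * (a i:ℝ)) + s)
        = (∑ i, (b i:ℝ)) - phiFun N a b (y k) - s := by
      have hsum : ∑ i, ((y k i + 1) * (b i:ℝ) + y k i - y k i * (a i:ℝ))
          = ∑ i, ((b i:ℝ) - ((a i:ℝ) - (b i:ℝ) - 1) * y k i) :=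
        Finset.sum_congr rfl fun i _ => by ring
      rw [Finset.sum_sub_distrib, Finset.sum_add_distrib, Finset.sum_sub_distrib] at hsum
      simp only [phiFun]
      linarith
    have hle : (∑ i, (y k i + 1) * (b i:ℝ)) + (∑ i, y k i)
        - ((∑ i, y k i * (a i:ℝ)) + s) ≤ E := by
      rw [hekE, hE]
      have := hphiy k
      linarith
    have hrle : r ^ E ≤ r ^ ((∑ i, (y k i + 1) * (b i:ℝ)) + (∑ i, y k i)
        - ((∑ i, y k i * (a i:ℝ)) + s)) :=
      Real.rpow_le_rpow_of_exponent_ge hr0 hr1.le hle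
    have hexp : r ^ ((∑ i, (y k i + 1) * (b i:ℝ)) + (∑ i, y k i)
        - ((∑ i, y k i * (a i:ℝ)) + s))
        = r ^ (∑ i, (y k i + 1) * (b i:ℝ)) * r ^ (∑ i, y k i)
          / r ^ ((∑ i, y k i * (a i:ℝ)) + s) := by
      rw [Real.rpow_sub hr0, Real.rpow_add hr0]
    calc κr = (1 - r) ^ N / (G.card : ℝ) * r ^ E := rfl
      _ ≤ (1 - r) ^ N / (G.card : ℝ) * (r ^ (∑ i, (y k i + 1) * (b i:ℝ)) * r ^ (∑ i, y k i)
          / r ^ ((∑ i, y k i * (a i:ℝ)) + s)) := by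
          rw [← hexp]
          exact mul_le_mul_of_nonneg_left hrle (by positivity)
      _ = ck * ((1 - r) ^ N * r ^ (∑ i, y k i)) := by
          rw [hck]
          have hd1 : ((G.card : ℝ)) ≠ 0 := ne_of_gt hGcard
          have hd2 : r ^ ((∑ i, y k i * (a i:ℝ)) + s) ≠ 0 := ne_of_gt (hrp _)
          field_simp
  have hκ0 : ENNReal.ofReal κr ≠ 0 := (ENNReal.ofReal_pos.mpr hκrpos).ne'
  have hpair : Pairwise (Function.onFun Disjoint B) := by
    intro k k' hkk'
    rcases hkk'.lt_or_gt with h | h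
    · exact hdisj _ _ h
    · exact (hdisj _ _ h).symm
  have htop : (⊤ : ℝ≥0∞) ≤ Ifun N G b r := by
    calc (⊤ : ℝ≥0∞) = ∑' _k : ℕ, ENNReal.ofReal κr :=
          (ENNReal.tsum_const_eq_top_of_ne_zero hκ0).symm
      _ ≤ ∑' k : ℕ, ∫⁻ x in B k, ENNReal.ofReal
            ((∏ i, x i ^ b i) / ∑ q ∈ G, (∏ i, x i ^ q.1 i) * r ^ q.2) :=
          ENNReal.tsum_le_tsum hbox
      _ = ∫⁻ x in ⋃ k, B k, ENNReal.ofReal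
            ((∏ i, x i ^ b i) / ∑ q ∈ G, (∏ i, x i ^ q.1 i) * r ^ q.2) :=
          (lintegral_iUnion hBmeas hpair _).symm
      _ ≤ Ifun N G b r := lintegral_mono_set (Set.iUnion_subset hBsub)
  exact (hA r hr0 hr1).ne (top_le_iff.mp htop)

/-- A polyhedron whose recession cone is trivial is bounded. -/
lemma poly_bounded {N : ℕ} (hN : 1 ≤ N) (C : Finset ((Fin N → ℝ) × ℝ)) (hC : C.Nonempty)
    (hcone : ∀ v : Fin N → ℝ, (∀ pr ∈ C, ∑ i, pr.1 i * v i ≤ 0) → v = 0) :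
    Bornology.IsBounded {y : Fin N → ℝ | ∀ pr ∈ C, ∑ i, pr.1 i * y i ≤ pr.2} := by
  haveI : Nonempty (Fin N) := Fin.pos_iff_nonempty.mp hN
  set F : (Fin N → ℝ) → ℝ := fun w => C.sup' hC fun pr => ∑ i, pr.1 i * w i with hF
  have hFcont : Continuous F :=
    Continuous.finset_sup'_apply hC fun pr _ =>
      continuous_finset_sum _ fun i _ => continuous_const.mul (continuous_apply i)
  have hhom : ∀ (t : ℝ), 0 ≤ t → ∀ w, F (t • w) = t * F w := by
    intro t ht w
    have h1 : ∀ pr : (Fin N → ℝ) × ℝ, ∑ i, pr.1 i * (t • w) i = t * ∑ i, pr.1 i * w i := by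
      intro pr
      rw [Finset.mul_sum]
      exact Finset.sum_congr rfl fun i _ => by simp [smul_eq_mul]; ring
    calc F (t • w) = C.sup' hC fun pr => t * ∑ i, pr.1 i * w i :=
          Finset.sup'_congr hC rfl fun pr _ => h1 pr
      _ = t * F w := by
          rw [hF]
          exact (Finset.comp_sup'_eq_sup'_comp hC (fun x : ℝ => t * x)
            (fun x y => by exact mul_max_of_nonneg x y ht)).symm
  have hsphere := isCompact_sphere (0 : Fin N → ℝ) 1
  have hsne : (Metric.sphere (0 : Fin N → ℝ) 1).Nonempty :=
    NormedSpace.sphere_nonempty.mpr zero_le_one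
  obtain ⟨v0, hv0s, hv0min⟩ := hsphere.exists_isMinOn hsne hFcont.continuousOn
  have hv0norm : ‖v0‖ = 1 := by simpa using hv0s
  have heps : 0 < F v0 := by
    by_contra h
    push_neg at h
    have hz : v0 = 0 := hcone v0 fun pr hpr => le_trans (Finset.le_sup' (fun pr => ∑ i, pr.1 i * v0 i) hpr) h
    rw [hz] at hv0norm
    simp at hv0norm
  rw [isBounded_iff_forall_norm_le]
  refine ⟨max (C.sup' hC (fun pr => pr.2) / F v0) 0, ?_⟩
  intro y hy
  rcases eq_or_ne y 0 with rfl | hy0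
  · simp
  · have hny : 0 < ‖y‖ := norm_pos_iff.mpr hy0
    have hmem : ‖y‖⁻¹ • y ∈ Metric.sphere (0 : Fin N → ℝ) 1 := by
      simp [norm_smul, abs_of_nonneg (inv_nonneg.mpr hny.le), inv_mul_cancel₀ hny.ne']
    have h1 : F v0 ≤ F (‖y‖⁻¹ • y) := hv0min hmem
    have h2 : F y = ‖y‖ * F (‖y‖⁻¹ • y) := by
      conv_lhs => rw [← smul_inv_smul₀ hny.ne' y]
      exact hhom _ hny.le _
    have h3 : F y ≤ C.sup' hC (fun pr => pr.2) :=
      Finset.sup'_le hC _ fun pr hpr => le_trans (hy pr hpr) (Finset.le_sup' (fun pr : (Fin N → ℝ) × ℝ => pr.2) hpr)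
    have h4 : ‖y‖ * F v0 ≤ C.sup' hC (fun pr => pr.2) := by
      have := mul_le_mul_of_nonneg_left h1 hny.le
      linarith
    have h5 : ‖y‖ ≤ C.sup' hC (fun pr => pr.2) / F v0 := by
      rw [le_div_iff₀ heps]
      linarith
    exact le_max_of_le_left h5
  
lemma Sc_bounded {N : ℕ} (hN : 1 ≤ N) {G : Finset ((Fin N → ℕ) × ℝ)} {b : Fin N → ℕ}
    {a : Fin N → ℕ} {s : ℝ}
    (hcone : ∀ v : Fin N → ℝ, (∀ i, 0 ≤ v i) →
      (∀ q ∈ G, ∑ i, ((a i:ℝ) - (q.1 i:ℝ)) * v i ≤ 0) → 0 ≤ phiFun N a b v → v = 0)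
    (c : ℝ) :
    Bornology.IsBounded {y | y ∈ Pset N G a s ∧ c ≤ phiFun N a b y} := by
  classical
  have hsingle : ∀ (w : Fin N → ℝ) (j : Fin N),
      ∑ i, (if i = j then (-1:ℝ) else 0) * w i = - w j := by
    intro w j
    rw [Finset.sum_eq_single j]
    · simp
    · intro i _ hij; simp [hij]
    · intro h; exact absurd (Finset.mem_univ j) h
  have hnegphi : ∀ w : Fin N → ℝ,
      ∑ i, (-((a i:ℝ) - (b i:ℝ) - 1)) * w i = - phiFun N a b w := by
    intro w
    rw [phiFun, ← Finset.sum_neg_distrib]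
    exact Finset.sum_congr rfl fun i _ => by ring
  set C : Finset ((Fin N → ℝ) × ℝ) :=
    insert ((fun i => -((a i:ℝ) - (b i:ℝ) - 1)), -c)
      ((G.image fun q => ((fun i => (a i:ℝ) - (q.1 i:ℝ)), q.2 - s)) ∪
        (Finset.univ.image fun j : Fin N =>
          ((fun i => if i = j then (-1:ℝ) else 0), (0:ℝ)))) with hC
  have hCne : C.Nonempty := ⟨_, Finset.mem_insert_self _ _⟩
  have hconeC : ∀ v : Fin N → ℝ, (∀ pr ∈ C, ∑ i, pr.1 i * v i ≤ 0) → v = 0 := by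
    intro v hv
    refine hcone v ?_ ?_ ?_
    · intro j
      have hmem : ((fun i => if i = j then (-1:ℝ) else 0), (0:ℝ)) ∈ C := by
        rw [hC]
        exact Finset.mem_insert_of_mem (Finset.mem_union_right _
          (Finset.mem_image.mpr ⟨j, Finset.mem_univ j, rfl⟩))
      have h := hv _ hmem
      rw [hsingle v j] at h
      linarith
    · intro q hq
      have hmem : ((fun i => (a i:ℝ) - (q.1 i:ℝ)), q.2 - s) ∈ C := by
        rw [hC]
        exact Finset.mem_insert_of_mem (Finset.mem_union_left _
          (Finset.mem_image.mpr ⟨q, hq, rfl⟩))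
      exact hv _ hmem
    · have h := hv _ (Finset.mem_insert_self _ _ : _ ∈ C)
      rw [hnegphi v] at h
      linarith
  refine (poly_bounded hN C hCne hconeC).subset ?_
  intro y hy
  obtain ⟨⟨hynn, hyq⟩, hyc⟩ := hy
  intro pr hpr
  rw [hC] at hpr
  rcases Finset.mem_insert.mp hpr with rfl | hpr'
  · rw [hnegphi y]
    simp only
    linarith
  rcases Finset.mem_union.mp hpr' with h | h
  · obtain ⟨q, hqG, rfl⟩ := Finset.mem_image.mp h
    exact hyq q hqG
  · obtain ⟨j, _, rfl⟩ := Finset.mem_image.mp h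
    rw [hsingle y j]
    simp only
    linarith [hynn j]

end Aux

/-- Under assumption (A), for every `(a,s) ∈ 𝔊°` with `a − b − 𝟏 ≠ 0`,
the linear function `φ_a` attains a maximum `m` on `P_{a,s}`, the set
`M_{a,s} = {x ∈ P_{a,s} : φ_a(x) = m}` is bounded, and its affine dimension
(the dimension of the direction of its affine span) is at most `N − 1`. -/
theorem stmt6 (N : ℕ) (hN : 1 ≤ N) (G : Finset ((Fin N → ℕ) × ℝ)) (hGne : G.Nonempty)
    (hGs : ∀ p ∈ G, 0 ≤ p.2) (b : Fin N → ℕ)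
    (hA : ∀ r : ℝ, 0 < r → r < 1 → Ifun N G b r < ⊤) :
    ∀ p ∈ Gcirc N G, (∃ i, p.1 i ≠ b i + 1) →
      ∃ m : ℝ, IsGreatest (phiFun N p.1 b '' Pset N G p.1 p.2) m ∧
        Bornology.IsBounded {x ∈ Pset N G p.1 p.2 | phiFun N p.1 b x = m} ∧
        Module.finrank ℝ
          (affineSpan ℝ {x ∈ Pset N G p.1 p.2 | phiFun N p.1 b x = m}).direction ≤ N - 1 := by
  intro p hp hne
  obtain ⟨hpG, hvolpos⟩ := Finset.mem_filter.mp hp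
  set a := p.1 with ha
  set s := p.2 with hs
  have hpG' : (a, s) ∈ G := by rwa [ha, hs, Prod.mk.eta]
  have hPne : (Pset N G a s).Nonempty :=
    nonempty_of_measure_ne_zero hvolpos.ne'
  obtain ⟨y0, hy0⟩ := hPne
  have hcone : ∀ v : Fin N → ℝ, (∀ i, 0 ≤ v i) →
      (∀ q ∈ G, ∑ i, ((a i:ℝ) - (q.1 i:ℝ)) * v i ≤ 0) → 0 ≤ phiFun N a b v → v = 0 :=
    fun v h1 h2 h3 => cone_key hA hpG' hy0 v h1 h2 h3
  -- continuity facts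
  have hsumcont : ∀ cf : Fin N → ℝ, Continuous fun y : Fin N → ℝ => ∑ i, cf i * y i :=
    fun cf => continuous_finset_sum _ fun i _ => continuous_const.mul (continuous_apply i)
  have hphicont : Continuous (phiFun N a b) := by
    have : phiFun N a b = fun y => ∑ i, ((a i:ℝ) - (b i:ℝ) - 1) * y i := rfl
    rw [this]; exact hsumcont _
  have hPclosed : IsClosed (Pset N G a s) := by
    have hrw : Pset N G a s = (⋂ i, {y : Fin N → ℝ | 0 ≤ y i}) ∩
        ⋂ q ∈ G, {y : Fin N → ℝ | ∑ i, ((a i:ℝ) - (q.1 i:ℝ)) * y i ≤ q.2 - s} := by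
      ext y
      simp [Pset, Set.mem_iInter]
    rw [hrw]
    exact IsClosed.inter
      (isClosed_iInter fun i => isClosed_le continuous_const (continuous_apply i))
      (isClosed_biInter fun q _ => isClosed_le (hsumcont _) continuous_const)
  -- the truncated set
  set S0 : Set (Fin N → ℝ) := {y | y ∈ Pset N G a s ∧ phiFun N a b y0 ≤ phiFun N a b y}
    with hS0
  have hS0closed : IsClosed S0 := by
    have hrw : S0 = Pset N G a s ∩ {y | phiFun N a b y0 ≤ phiFun N a b y} := rfl
    rw [hrw]
    exact hPclosed.inter (isClosed_le continuous_const hphicont)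
  have hS0bdd : Bornology.IsBounded S0 := Sc_bounded hN hcone _
  have hS0compact : IsCompact S0 := Metric.isCompact_of_isClosed_isBounded hS0closed hS0bdd
  have hS0ne : S0.Nonempty := ⟨y0, hy0, le_refl _⟩
  obtain ⟨z, hzS, hzmax⟩ := hS0compact.exists_isMaxOn hS0ne hphicont.continuousOn
  set m : ℝ := phiFun N a b z with hm
  have hub : ∀ x ∈ Pset N G a s, phiFun N a b x ≤ m := by
    intro x hx
    by_cases h : phiFun N a b y0 ≤ phiFun N a b x
    · exact hzmax ⟨hx, h⟩
    · push_neg at h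
      have : phiFun N a b y0 ≤ m := hzmax ⟨hy0, le_refl _⟩
      linarith
  refine ⟨m, ⟨⟨z, hzS.1, rfl⟩, ?_⟩, ?_, ?_⟩
  · rintro w ⟨x, hx, rfl⟩
    exact hub x hx
  · -- boundedness of M
    refine (Sc_bounded (G := G) (s := s) hN hcone m).subset ?_
    rintro x ⟨hxP, hxm⟩
    exact ⟨hxP, le_of_eq hxm.symm⟩
  · -- dimension bound
    set M : Set (Fin N → ℝ) := {x ∈ Pset N G a s | phiFun N a b x = m} with hM
    have hNfr : Module.finrank ℝ (Fin N → ℝ) = N := Module.finrank_fin_fun ℝ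
    set L : (Fin N → ℝ) →ₗ[ℝ] ℝ :=
      { toFun := phiFun N a b
        map_add' := fun x y => by
          simp only [phiFun, Pi.add_apply]
          rw [← Finset.sum_add_distrib]
          exact Finset.sum_congr rfl fun i _ => by ring
        map_smul' := fun t x => by
          simp only [phiFun, Pi.smul_apply, smul_eq_mul, RingHom.id_apply]
          rw [Finset.mul_sum]
          exact Finset.sum_congr rfl fun i _ => by ring } with hL
    have hLne : L ≠ 0 := by
      obtain ⟨j, hj⟩ := hne
      intro h0
      set e : Fin N → ℝ := fun i => if i = j then (1:ℝ) else 0 with he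
      have h1 : L e = (a j:ℝ) - (b j:ℝ) - 1 := by
        have hrw : L e = ∑ i, ((a i:ℝ) - (b i:ℝ) - 1) * e i := rfl
        rw [hrw, Finset.sum_eq_single j]
        · simp [he]
        · intro i _ hij; simp [he, hij]
        · intro h; exact absurd (Finset.mem_univ j) h
      rw [h0] at h1
      simp only [LinearMap.zero_apply] at h1
      have : (a j:ℝ) = (b j:ℝ) + 1 := by linarith
      have : a j = b j + 1 := by exact_mod_cast this
      exact hj this
    have hsub : vectorSpan ℝ M ≤ LinearMap.ker L := by
      rw [vectorSpan_def]
      apply Submodule.span_le.mpr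
      rintro u hu
      rw [Set.mem_vsub] at hu
      obtain ⟨x, hx, w, hw, rfl⟩ := hu
      simp only [SetLike.mem_coe, LinearMap.mem_ker]
      have hxm : L x = m := hx.2
      have hwm : L w = m := hw.2
      have : (x -ᵥ w : Fin N → ℝ) = x - w := rfl
      rw [this, map_sub, hxm, hwm, sub_self]
    have hker : Module.finrank ℝ (LinearMap.ker L) + 1 ≤ N := by
      have h1 := LinearMap.finrank_range_add_finrank_ker L
      rw [hNfr] at h1
      have h2 : 0 < Module.finrank ℝ (LinearMap.range L) := by
        rw [Module.finrank_pos_iff]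
        exact Submodule.nontrivial_iff_ne_bot.mpr
          (fun hbot => hLne (LinearMap.range_eq_bot.mp hbot))
      omega
    have hdir : (affineSpan ℝ M).direction = vectorSpan ℝ M := direction_affineSpan ℝ M
    calc Module.finrank ℝ (affineSpan ℝ M).direction
        = Module.finrank ℝ (vectorSpan ℝ M) := by rw [hdir]
      _ ≤ Module.finrank ℝ (LinearMap.ker L) := Submodule.finrank_mono hsub
      _ ≤ N - 1 := by omega
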